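/- Let R be a strongly G-graded algebra with A = R_1 and let T̃ be a G-graded R-module with identity component T = T̃_1. Then for every g ∈ G and every G-graded R-module M there is a natural k-module isomorphism Hom_{R-Gr}(T̃, M(g)) ≅ Hom_A(T, R_g ⊗_A M_1), and consequently Hom_R(T̃, M) ≅ ⊕_{g∈G} Hom_A(T, R_g ⊗_A M_1) when T̃ is finitely generated. -/

import Mathlib

set_option linter.unusedVariables false
set_option linter.unusedSectionVars false
set_option synthInstance.maxHeartbeats 1000000
set_option maxHeartbeats 1000000
/-! ### Library: basics on group-graded algebras.
The group `G` is written additively (an additive group is the same thing as a group);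
the identity component is `ℛ 0`. -/

section GradedLib

variable {k R G : Type*} [CommRing k] [Ring R] [Algebra k R] [AddGroup G]
variable (ℛ : G → Submodule k R) [SetLike.GradedMonoid ℛ]

/-- `R` is *strongly graded* if `ℛ g * ℛ h = ℛ (g + h)` for all `g h`. -/
def IsStronglyGraded : Prop := ∀ g h : G, ℛ g * ℛ h = ℛ (g + h)

namespace GrComp

variable {ℛ}

lemma mul_mem_shift {g h : G} {x y : R} (hx : x ∈ ℛ g) (hy : y ∈ ℛ h) :
    x * y ∈ ℛ (g + h) := SetLike.GradedMul.mul_mem hx hy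

variable (ℛ)

/-- Left action of the identity component on each component, by multiplication. -/
instance instSMul (g : G) : SMul ↥(ℛ 0) ↥(ℛ g) :=
  ⟨fun a x => ⟨(a : R) * (x : R), by
    have := mul_mem_shift a.2 x.2; rwa [zero_add] at this⟩⟩

@[simp] lemma coe_smul (g : G) (a : ↥(ℛ 0)) (x : ↥(ℛ g)) :
    ((a • x : ↥(ℛ g)) : R) = (a : R) * (x : R) := rfl

/-- Each component is a left module over the identity component. -/
instance instModule (g : G) : Module ↥(ℛ 0) ↥(ℛ g) where
  one_smul x := Subtype.ext (one_mul (x : R))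
  mul_smul a b x := Subtype.ext (mul_assoc (a : R) (b : R) (x : R))
  smul_zero a := Subtype.ext (mul_zero (a : R))
  smul_add a x y := Subtype.ext (mul_add (a : R) (x : R) (y : R))
  add_smul a b x := Subtype.ext (add_mul (a : R) (b : R) (x : R))
  zero_smul x := Subtype.ext (zero_mul (x : R))

/-- Right action of the identity component on each component, by multiplication. -/
instance instSMulOp (g : G) : SMul (↥(ℛ 0))ᵐᵒᵖ ↥(ℛ g) :=
  ⟨fun a x => ⟨(x : R) * (a.unop : R), by
    have := mul_mem_shift x.2 a.unop.2; rwa [add_zero] at this⟩⟩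

@[simp] lemma coe_smul_op (g : G) (a : (↥(ℛ 0))ᵐᵒᵖ) (x : ↥(ℛ g)) :
    ((a • x : ↥(ℛ g)) : R) = (x : R) * (a.unop : R) := rfl

/-- Each component is a right module over the identity component. -/
instance instModuleOp (g : G) : Module (↥(ℛ 0))ᵐᵒᵖ ↥(ℛ g) where
  one_smul x := Subtype.ext (mul_one (x : R))
  mul_smul a b x := Subtype.ext (mul_assoc (x : R) (b.unop : R) (a.unop : R)).symm
  smul_zero a := Subtype.ext (zero_mul _)
  smul_add a x y := Subtype.ext (add_mul (x : R) (y : R) (a.unop : R))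
  add_smul a b x := Subtype.ext (mul_add (x : R) (a.unop : R) (b.unop : R))
  zero_smul x := Subtype.ext (mul_zero (x : R))

/-- The two actions commute: components are bimodules. -/
instance instSMulCommClass (g : G) :
    SMulCommClass ↥(ℛ 0) (↥(ℛ 0))ᵐᵒᵖ ↥(ℛ g) :=
  ⟨fun a b x => Subtype.ext (mul_assoc (a : R) (x : R) (b.unop : R)).symm⟩

end GrComp

end GradedLib

section RAsBimodule

variable {k R G : Type*} [CommRing k] [Ring R] [Algebra k R] [AddGroup G]
variable (ℛ : G → Submodule k R) [SetLike.GradedMonoid ℛ]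

/-- The identity component acts on `R` on the left, by multiplication. -/
instance GrComp.instModuleSelfLeft : Module ↥(ℛ 0) R where
  smul a r := (a : R) * r
  one_smul r := one_mul r
  mul_smul a b r := mul_assoc (a : R) (b : R) r
  smul_zero a := mul_zero (a : R)
  smul_add a r s := mul_add (a : R) r s
  add_smul a b r := add_mul (a : R) (b : R) r
  zero_smul r := zero_mul r

@[simp] lemma GrComp.smul_self_left_def (a : ↥(ℛ 0)) (r : R) :
    a • r = (a : R) * r := rfl

/-- The identity component acts on `R` on the right, by multiplication. -/
instance GrComp.instModuleSelfRight : Module (↥(ℛ 0))ᵐᵒᵖ R where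
  smul a r := r * (a.unop : R)
  one_smul r := mul_one r
  mul_smul a b r := (mul_assoc r (b.unop : R) (a.unop : R)).symm
  smul_zero a := zero_mul _
  smul_add a r s := add_mul r s (a.unop : R)
  add_smul a b r := mul_add r (a.unop : R) (b.unop : R)
  zero_smul r := mul_zero r

@[simp] lemma GrComp.smul_self_right_def (a : (↥(ℛ 0))ᵐᵒᵖ) (r : R) :
    a • r = r * (a.unop : R) := rfl

instance GrComp.instSMulCommClassSelf :
    SMulCommClass R (↥(ℛ 0))ᵐᵒᵖ R :=
  ⟨fun r a x => (mul_assoc r x (a.unop : R)).symm⟩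

instance GrComp.instSMulCommClassSelf' :
    SMulCommClass ↥(ℛ 0) (↥(ℛ 0))ᵐᵒᵖ R :=
  ⟨fun a b x => (mul_assoc (a : R) x (b.unop : R)).symm⟩

end RAsBimodule
/-! ### Library: tensor product `M ⊗[A] N` over a possibly noncommutative ring `A`,
for a right `A`-module `M` and a left `A`-module `N`, realized as a quotient of `M ⊗[ℤ] N`. -/

noncomputable section NCTensorLib

open TensorProduct MulOpposite

/-- The subgroup of relations defining the balanced tensor product. -/
def NCT.rels (A : Type*) [Ring A] (M N : Type*) [AddCommGroup M] [AddCommGroup N]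
    [Module Aᵐᵒᵖ M] [Module A N] : AddSubgroup (M ⊗[ℤ] N) :=
  AddSubgroup.closure
    {z | ∃ (a : A) (m : M) (n : N), z = (op a • m) ⊗ₜ[ℤ] n - m ⊗ₜ[ℤ] (a • n)}

/-- The tensor product over `A` of a right `A`-module and a left `A`-module. -/
def NCT (A : Type*) [Ring A] (M N : Type*) [AddCommGroup M] [AddCommGroup N]
    [Module Aᵐᵒᵖ M] [Module A N] : Type _ :=
  (M ⊗[ℤ] N) ⧸ NCT.rels A M N

namespace NCT

variable {A : Type*} [Ring A] {M N : Type*} [AddCommGroup M] [AddCommGroup N]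
  [Module Aᵐᵒᵖ M] [Module A N]

instance : AddCommGroup (NCT A M N) :=
  QuotientAddGroup.Quotient.addCommGroup _

/-- The canonical generator `m ⊗ n` of `NCT A M N`. -/
def mk (A : Type*) [Ring A] {M N : Type*} [AddCommGroup M] [AddCommGroup N]
    [Module Aᵐᵒᵖ M] [Module A N] (m : M) (n : N) : NCT A M N :=
  QuotientAddGroup.mk (m ⊗ₜ[ℤ] n)

lemma mk_balanced (a : A) (m : M) (n : N) :
    mk A (op a • m) n = mk A m (a • n) := by
  refine QuotientAddGroup.eq.2 ?_
  have : -((op a • m) ⊗ₜ[ℤ] n) + m ⊗ₜ[ℤ] (a • n)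
      = -((op a • m) ⊗ₜ[ℤ] n - m ⊗ₜ[ℤ] (a • n)) := by abel
  rw [this]
  exact neg_mem (AddSubgroup.subset_closure ⟨a, m, n, rfl⟩)

lemma mk_add_left (m m' : M) (n : N) :
    mk A (m + m') n = mk A m n + mk A m' n := by
  show QuotientAddGroup.mk _ = _
  rw [add_tmul]; rfl

lemma mk_add_right (m : M) (n n' : N) :
    mk A m (n + n') = mk A m n + mk A m n' := by
  show QuotientAddGroup.mk _ = _
  rw [tmul_add]; rfl

section LeftModule

variable {C : Type*} [Ring C] [Module C M] [SMulCommClass C Aᵐᵒᵖ M]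

/-- Auxiliary endomorphism of `M ⊗[ℤ] N` induced by the action of `c : C` on `M`. -/
def lAux (N : Type*) [AddCommGroup N] (c : C) : (M ⊗[ℤ] N) →ₗ[ℤ] (M ⊗[ℤ] N) :=
  TensorProduct.map (DistribMulAction.toAddMonoidHom M c).toIntLinearMap LinearMap.id

lemma lAux_tmul (c : C) (m : M) (n : N) :
    lAux N c (m ⊗ₜ[ℤ] n) = (c • m) ⊗ₜ[ℤ] n := rfl

lemma rels_le_comap_lAux (A : Type*) [Ring A] [Module Aᵐᵒᵖ M] [Module A N]
    [SMulCommClass C Aᵐᵒᵖ M] (c : C) :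
    NCT.rels A M N ≤ (NCT.rels A M N).comap (lAux N c).toAddMonoidHom := by
  refine (AddSubgroup.closure_le _).2 ?_
  rintro z ⟨a, m, n, rfl⟩
  refine AddSubgroup.mem_comap.2 ?_
  have h : lAux N c ((op a • m) ⊗ₜ[ℤ] n - m ⊗ₜ[ℤ] (a • n))
      = (op a • (c • m)) ⊗ₜ[ℤ] n - (c • m) ⊗ₜ[ℤ] (a • n) := by
    rw [map_sub, lAux_tmul, lAux_tmul, smul_comm]
  rw [LinearMap.toAddMonoidHom_coe, h]
  exact AddSubgroup.subset_closure ⟨a, c • m, n, rfl⟩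

/-- The action of `c : C` on the balanced tensor product, via the left factor. -/
def lsmul (c : C) : NCT A M N →+ NCT A M N :=
  QuotientAddGroup.map _ _ (lAux N c).toAddMonoidHom (rels_le_comap_lAux A c)

lemma lsmul_mk (c : C) (m : M) (n : N) :
    lsmul c (mk A m n) = mk A (c • m) n := by
  show QuotientAddGroup.mk _ = _
  rfl

instance instModuleLeft : Module C (NCT A M N) where
  smul c x := lsmul c x
  one_smul x := by
    refine QuotientAddGroup.induction_on x (fun z => ?_)
    show QuotientAddGroup.mk (lAux N (1 : C) z) = QuotientAddGroup.mk z
    congr 1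
    have h1 : lAux (M := M) N (1 : C) = LinearMap.id := by
      apply TensorProduct.ext'
      intro m n
      show ((1 : C) • m) ⊗ₜ[ℤ] n = m ⊗ₜ[ℤ] n
      rw [one_smul]
    rw [h1]; rfl
  mul_smul c d x := by
    refine QuotientAddGroup.induction_on x (fun z => ?_)
    show QuotientAddGroup.mk (lAux N (c * d) z)
      = QuotientAddGroup.mk (lAux N c (lAux N d z))
    congr 1
    have h1 : lAux (M := M) N (c * d) = (lAux N c).comp (lAux N d) := by
      apply TensorProduct.ext'
      intro m n
      show ((c * d) • m) ⊗ₜ[ℤ] n = (c • d • m) ⊗ₜ[ℤ] n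
      rw [mul_smul]
    rw [h1]; rfl
  smul_zero c := map_zero (lsmul (A := A) (M := M) (N := N) c)
  smul_add c x y := map_add (lsmul (A := A) (M := M) (N := N) c) x y
  add_smul c d x := by
    refine QuotientAddGroup.induction_on x (fun z => ?_)
    show QuotientAddGroup.mk (lAux N (c + d) z)
      = QuotientAddGroup.mk (lAux N c z) + QuotientAddGroup.mk (lAux N d z)
    have h1 : lAux (M := M) N (c + d) = lAux N c + lAux N d := by
      apply TensorProduct.ext'
      intro m n
      show ((c + d) • m) ⊗ₜ[ℤ] n = (c • m) ⊗ₜ[ℤ] n + (d • m) ⊗ₜ[ℤ] n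
      rw [add_smul, add_tmul]
    rw [h1]; rfl
  zero_smul x := by
    refine QuotientAddGroup.induction_on x (fun z => ?_)
    show QuotientAddGroup.mk (lAux N (0 : C) z) = 0
    have h1 : lAux (M := M) N (0 : C) = 0 := by
      apply TensorProduct.ext'
      intro m n
      show ((0 : C) • m) ⊗ₜ[ℤ] n = 0
      rw [zero_smul, zero_tmul]
    rw [h1]; rfl

lemma smul_mk (c : C) (m : M) (n : N) :
    c • mk A m n = mk A (c • m) n := lsmul_mk c m n

end LeftModule

section RightModule

variable {C : Type*} [Ring C] [Module C N] [SMulCommClass A C N]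

/-- Auxiliary endomorphism of `M ⊗[ℤ] N` induced by the action of `c : C` on `N`. -/
def rAux (M : Type*) [AddCommGroup M] (c : C) : (M ⊗[ℤ] N) →ₗ[ℤ] (M ⊗[ℤ] N) :=
  TensorProduct.map LinearMap.id (DistribMulAction.toAddMonoidHom N c).toIntLinearMap

lemma rAux_tmul (c : C) (m : M) (n : N) :
    rAux M c (m ⊗ₜ[ℤ] n) = m ⊗ₜ[ℤ] (c • n) := rfl

lemma rels_le_comap_rAux (c : C) :
    NCT.rels A M N ≤ (NCT.rels A M N).comap (rAux M c).toAddMonoidHom := by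
  refine (AddSubgroup.closure_le _).2 ?_
  rintro z ⟨a, m, n, rfl⟩
  refine AddSubgroup.mem_comap.2 ?_
  have h : rAux M c ((op a • m) ⊗ₜ[ℤ] n - m ⊗ₜ[ℤ] (a • n))
      = (op a • m) ⊗ₜ[ℤ] (c • n) - m ⊗ₜ[ℤ] (a • (c • n)) := by
    rw [map_sub, rAux_tmul, rAux_tmul, ← smul_comm a c n]
  rw [LinearMap.toAddMonoidHom_coe, h]
  exact AddSubgroup.subset_closure ⟨a, m, c • n, rfl⟩

/-- The action of `c : C` on the balanced tensor product, via the right factor. -/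
def rsmul (c : C) : NCT A M N →+ NCT A M N :=
  QuotientAddGroup.map _ _ (rAux M c).toAddMonoidHom (rels_le_comap_rAux c)

lemma rsmul_mk (c : C) (m : M) (n : N) :
    rsmul c (mk A m n) = mk A m (c • n) := by
  show QuotientAddGroup.mk _ = _
  rfl

instance instModuleRight : Module C (NCT A M N) where
  smul c x := rsmul c x
  one_smul x := by
    refine QuotientAddGroup.induction_on x (fun z => ?_)
    show QuotientAddGroup.mk (rAux M (1 : C) z) = QuotientAddGroup.mk z
    congr 1
    have h1 : rAux (N := N) M (1 : C) = LinearMap.id := by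
      apply TensorProduct.ext'
      intro m n
      show m ⊗ₜ[ℤ] ((1 : C) • n) = m ⊗ₜ[ℤ] n
      rw [one_smul]
    rw [h1]; rfl
  mul_smul c d x := by
    refine QuotientAddGroup.induction_on x (fun z => ?_)
    show QuotientAddGroup.mk (rAux M (c * d) z)
      = QuotientAddGroup.mk (rAux M c (rAux M d z))
    congr 1
    have h1 : rAux (N := N) M (c * d) = (rAux M c).comp (rAux M d) := by
      apply TensorProduct.ext'
      intro m n
      show m ⊗ₜ[ℤ] ((c * d) • n) = m ⊗ₜ[ℤ] (c • d • n)
      rw [mul_smul]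
    rw [h1]; rfl
  smul_zero c := map_zero (rsmul (A := A) (M := M) (N := N) c)
  smul_add c x y := map_add (rsmul (A := A) (M := M) (N := N) c) x y
  add_smul c d x := by
    refine QuotientAddGroup.induction_on x (fun z => ?_)
    show QuotientAddGroup.mk (rAux M (c + d) z)
      = QuotientAddGroup.mk (rAux M c z) + QuotientAddGroup.mk (rAux M d z)
    have h1 : rAux (N := N) M (c + d) = rAux M c + rAux M d := by
      apply TensorProduct.ext'
      intro m n
      show m ⊗ₜ[ℤ] ((c + d) • n) = m ⊗ₜ[ℤ] (c • n) + m ⊗ₜ[ℤ] (d • n)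
      rw [add_smul, tmul_add]
    rw [h1]; rfl
  zero_smul x := by
    refine QuotientAddGroup.induction_on x (fun z => ?_)
    show QuotientAddGroup.mk (rAux M (0 : C) z) = 0
    have h1 : rAux (N := N) M (0 : C) = 0 := by
      apply TensorProduct.ext'
      intro m n
      show m ⊗ₜ[ℤ] ((0 : C) • n) = 0
      rw [zero_smul, tmul_zero]
    rw [h1]; rfl

lemma smul_mk_right (c : C) (m : M) (n : N) :
    c • mk A m n = mk A m (c • n) := rsmul_mk c m n

end RightModule

section CommClass

/-- The module structures on `NCT A M N` coming from the two factors commute. -/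
instance instSMulCommClassLR
    {C : Type*} [Ring C] [Module C M] [SMulCommClass C Aᵐᵒᵖ M]
    {C' : Type*} [Ring C'] [Module C' N] [SMulCommClass A C' N] :
    SMulCommClass C C' (NCT A M N) where
  smul_comm c c' x := by
    refine QuotientAddGroup.induction_on x (fun z => ?_)
    show (QuotientAddGroup.mk (lAux N c (rAux M c' z)) : NCT A M N)
      = (QuotientAddGroup.mk (rAux M c' (lAux N c z)) : NCT A M N)
    congr 1
    have h : (lAux (M := M) N c).comp (rAux (N := N) M c')
        = (rAux (N := N) M c').comp (lAux (M := M) N c) := by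
      apply TensorProduct.ext'
      intro m n
      rfl
    exact LinearMap.congr_fun h z

end CommClass

section Map

variable {N' : Type*} [AddCommGroup N'] [Module A N']

/-- Functoriality of the balanced tensor product in the right variable. -/
def mapRight (f : N →ₗ[A] N') : NCT A M N →+ NCT A M N' :=
  QuotientAddGroup.map _ _
    (TensorProduct.map LinearMap.id f.toAddMonoidHom.toIntLinearMap).toAddMonoidHom
    (by
      refine (AddSubgroup.closure_le _).2 ?_
      rintro z ⟨a, m, n, rfl⟩
      refine AddSubgroup.mem_comap.2 ?_
      have h : TensorProduct.map LinearMap.id f.toAddMonoidHom.toIntLinearMap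
          ((op a • m) ⊗ₜ[ℤ] n - m ⊗ₜ[ℤ] (a • n))
          = (op a • m) ⊗ₜ[ℤ] (f n) - m ⊗ₜ[ℤ] (a • f n) := by
        rw [map_sub]
        congr 1
        show m ⊗ₜ[ℤ] (f (a • n)) = m ⊗ₜ[ℤ] (a • f n)
        rw [map_smul]
      rw [LinearMap.toAddMonoidHom_coe, h]
      exact AddSubgroup.subset_closure ⟨a, m, f n, rfl⟩)

lemma mapRight_mk (f : N →ₗ[A] N') (m : M) (n : N) :
    mapRight (M := M) f (mk A m n) = mk A m (f n) := by
  show QuotientAddGroup.mk _ = _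
  rfl

variable {C : Type*} [Ring C] [Module C M] [SMulCommClass C Aᵐᵒᵖ M]

/-- Bundled `C`-linear version of `mapRight`, for the module structure via the left factor. -/
def lmapRight (f : N →ₗ[A] N') : NCT A M N →ₗ[C] NCT A M N' where
  toFun := mapRight f
  map_add' := map_add _
  map_smul' c x := by
    refine QuotientAddGroup.induction_on x (fun z => ?_)
    show (QuotientAddGroup.mk
        (TensorProduct.map LinearMap.id f.toAddMonoidHom.toIntLinearMap (lAux N c z))
        : NCT A M N')
      = (QuotientAddGroup.mk
        (lAux N' c (TensorProduct.map LinearMap.id f.toAddMonoidHom.toIntLinearMap z))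
        : NCT A M N')
    congr 1
    have h : (TensorProduct.map (LinearMap.id : M →ₗ[ℤ] M)
          f.toAddMonoidHom.toIntLinearMap).comp (lAux (M := M) N c)
        = (lAux (M := M) N' c).comp
            (TensorProduct.map (LinearMap.id : M →ₗ[ℤ] M) f.toAddMonoidHom.toIntLinearMap) := by
      apply TensorProduct.ext'
      intro m n
      rfl
    exact LinearMap.congr_fun h z

lemma lmapRight_mk (f : N →ₗ[A] N') (m : M) (n : N) :
    (lmapRight f : NCT A M N →ₗ[C] NCT A M N') (mk A m n) = mk A m (f n) := rfl

end Map

section MapLeft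

variable {M' : Type*} [AddCommGroup M'] [Module Aᵐᵒᵖ M']

/-- Functoriality of the balanced tensor product in the left variable, for a right
`A`-linear map. -/
def mapLeft (g : M →+ M') (hg : ∀ (a : Aᵐᵒᵖ) (m : M), g (a • m) = a • g m) :
    NCT A M N →+ NCT A M' N :=
  QuotientAddGroup.map _ _
    (TensorProduct.map g.toIntLinearMap LinearMap.id).toAddMonoidHom
    (by
      refine (AddSubgroup.closure_le _).2 ?_
      rintro z ⟨a, m, n, rfl⟩
      refine AddSubgroup.mem_comap.2 ?_
      have h : TensorProduct.map g.toIntLinearMap LinearMap.id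
          ((op a • m) ⊗ₜ[ℤ] n - m ⊗ₜ[ℤ] (a • n))
          = (op a • g m) ⊗ₜ[ℤ] n - (g m) ⊗ₜ[ℤ] (a • n) := by
        rw [map_sub]
        congr 1
        show (g (op a • m)) ⊗ₜ[ℤ] n = _
        rw [hg]
      rw [LinearMap.toAddMonoidHom_coe, h]
      exact AddSubgroup.subset_closure ⟨a, g m, n, rfl⟩)

lemma mapLeft_mk (g : M →+ M') (hg : ∀ (a : Aᵐᵒᵖ) (m : M), g (a • m) = a • g m)
    (m : M) (n : N) : mapLeft (N := N) g hg (mk A m n) = mk A (g m) n := by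
  show QuotientAddGroup.mk _ = _
  rfl

end MapLeft

end NCT

end NCTensorLib

/-!
STATEMENT 14: Let `R` be strongly `G`-graded with `A = R₁` (written `ℛ 0`), `T̃` a
`G`-graded `R`-module with identity component `T = T̃₁`, and `M` a `G`-graded
`R`-module.  Then for every `g ∈ G` there is a `k`-module isomorphism (natural in
both variables) `Hom_{R-Gr}(T̃, M(g)) ≅ Hom_A(T, R_g ⊗_A M₁)`, and consequently
`Hom_R(T̃, M) ≅ ⊕_{g ∈ G} Hom_A(T, R_g ⊗_A M₁)` when `T̃` is finitely generated.
-/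

section Statement14

open scoped DirectSum

variable {k R G : Type} [CommRing k] [Ring R] [Algebra k R] [AddGroup G] [DecidableEq G]
variable (ℛ : G → Submodule k R) [SetLike.GradedMonoid ℛ]

/-- A `G`-graded `R`-module which is also a `k`-module (compatibly), graded by
`k`-submodules. -/
structure GrModK where
  carrier : Type
  [acg : AddCommGroup carrier]
  [modk : Module k carrier]
  [modR : Module R carrier]
  [tower : IsScalarTower k R carrier]
  grading : G → Submodule k carrier
  smul_mem' : ∀ {g h : G} {r : R} {m : carrier},
    r ∈ ℛ g → m ∈ grading h → r • m ∈ grading (g + h)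
  internal' : DirectSum.IsInternal grading

attribute [instance] GrModK.acg GrModK.modk GrModK.modR GrModK.tower

namespace GrModK

variable {ℛ}

/-- The identity component `ℛ 0` acts on every component of a graded module. -/
instance instSMulComp (M : GrModK ℛ) (h : G) :
    SMul ↥(ℛ 0) ↥(M.grading h) :=
  ⟨fun a x => ⟨(a : R) • (x : M.carrier), by
    have := M.smul_mem' a.2 x.2; rwa [zero_add] at this⟩⟩

instance instModuleComp (M : GrModK ℛ) (h : G) :
    Module ↥(ℛ 0) ↥(M.grading h) where
  one_smul x := Subtype.ext (one_smul R (x : M.carrier))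
  mul_smul a b x := Subtype.ext (mul_smul (a : R) (b : R) (x : M.carrier))
  smul_zero a := Subtype.ext (smul_zero (a : R))
  smul_add a x y := Subtype.ext (smul_add (a : R) (x : M.carrier) (y : M.carrier))
  add_smul a b x := Subtype.ext (add_smul (a : R) (b : R) (x : M.carrier))
  zero_smul x := Subtype.ext (zero_smul R (x : M.carrier))

instance instSMulCommCompK (M : GrModK ℛ) (h : G) :
    SMulCommClass ↥(ℛ 0) k ↥(M.grading h) :=
  ⟨fun a c x => Subtype.ext (smul_comm (a : R) c (x : M.carrier))⟩

instance instSMulCommCompK' (M : GrModK ℛ) (h : G) :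
    SMulCommClass k ↥(ℛ 0) ↥(M.grading h) :=
  ⟨fun c a x => Subtype.ext (smul_comm c (a : R) (x : M.carrier))⟩

end GrModK

/-- `Hom_{R-Gr}(T̃, M(g))`: the `k`-submodule of `Hom_R(T̃, M)` consisting of the
`R`-linear maps shifting the grading by `g`, i.e. the graded morphisms from `T̃` to
the `g`-suspension `M(g)`. -/
def gradedHomSusp (T' M : GrModK ℛ) (g : G) :
    Submodule k (T'.carrier →ₗ[R] M.carrier) where
  carrier := {f | ∀ (h : G), ∀ x ∈ T'.grading h, f x ∈ M.grading (h + g)}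
  zero_mem' := fun h x _ => by
    simp only [LinearMap.zero_apply]
    exact (M.grading (h + g)).zero_mem
  add_mem' := fun {f₁ f₂} h₁ h₂ h x hx => by
    simp only [LinearMap.add_apply]
    exact (M.grading (h + g)).add_mem (h₁ h x hx) (h₂ h x hx)
  smul_mem' := fun c f hf h x hx => by
    simp only [LinearMap.smul_apply]
    exact (M.grading (h + g)).smul_mem c (hf h x hx)

/-! ### Proof development -/

namespace Stmt14Aux

open DirectSum TensorProduct MulOpposite

variable {ℛ}

section Multisets

lemma coe_msum {V : Type} [AddCommGroup V] [Module k V] {S : Submodule k V}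
    {ι : Type} (σ : Multiset ι) (F : ι → ↥S) :
    (((σ.map F).sum : ↥S) : V) = (σ.map fun i => (F i : V)).sum := by
  induction σ using Multiset.induction with
  | empty => rfl
  | cons a s ih => simp only [Multiset.map_cons, Multiset.sum_cons, Submodule.coe_add, ih]

lemma sum_map_smul {ι : Type} {N : Type} [AddCommGroup N] [Module R N]
    (σ : Multiset ι) (F : ι → R) (x : N) :
    (σ.map fun p => F p • x).sum = ((σ.map F).sum) • x := by
  induction σ using Multiset.induction with
  | empty => simp
  | cons a s ih => simp only [Multiset.map_cons, Multiset.sum_cons, ih, add_smul]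

lemma msum_mem {V : Type} [AddCommGroup V] [Module k V] {S : Submodule k V}
    {ι : Type} (σ : Multiset ι) (F : ι → V) (hF : ∀ i ∈ σ, F i ∈ S) :
    (σ.map F).sum ∈ S := by
  induction σ using Multiset.induction with
  | empty => simp
  | cons a s ih =>
    rw [Multiset.map_cons, Multiset.sum_cons]
    exact S.add_mem (hF a (Multiset.mem_cons_self a s))
      (ih fun i hi => hF i (Multiset.mem_cons_of_mem hi))

lemma multiset_sum_comm {ι κ N : Type} [AddCommMonoid N] (s : Multiset ι) (t : Multiset κ)
    (f : ι → κ → N) :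
    (s.map fun i => (t.map fun j => f i j).sum).sum
      = (t.map fun j => (s.map fun i => f i j).sum).sum := by
  induction s using Multiset.induction with
  | empty =>
    simp only [Multiset.map_zero, Multiset.sum_zero]
    refine (Multiset.sum_eq_zero ?_).symm
    intro y hy
    rw [Multiset.mem_map] at hy
    obtain ⟨j, hj, rfl⟩ := hy
    rfl
  | cons a s ih =>
    rw [Multiset.map_cons, Multiset.sum_cons, ih, ← Multiset.sum_map_add]
    refine congrArg Multiset.sum (Multiset.map_congr rfl fun j hj => ?_)
    rw [Multiset.map_cons, Multiset.sum_cons]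

end Multisets

section Basics

lemma exists_one_decomp (hstrong : IsStronglyGraded ℛ) (g : G) :
    ∃ σ : Multiset (↥(ℛ g) × ↥(ℛ (-g))),
      (σ.map fun p => (p.1 : R) * (p.2 : R)).sum = 1 := by
  have h1 : (1:R) ∈ ℛ g * ℛ (-g) := by
    have h2 := hstrong g (-g)
    rw [add_neg_cancel] at h2
    rw [h2]; exact SetLike.one_mem_graded ℛ
  refine Submodule.mul_induction_on
    (C := fun x => ∃ σ : Multiset (↥(ℛ g) × ↥(ℛ (-g))),
      (σ.map fun p => (p.1 : R) * (p.2 : R)).sum = x) h1 ?_ ?_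
  · intro m hm n hn
    exact ⟨{(⟨m, hm⟩, ⟨n, hn⟩)}, by simp⟩
  · rintro x y ⟨σ₁, h₁⟩ ⟨σ₂, h₂⟩
    exact ⟨σ₁ + σ₂, by rw [Multiset.map_add, Multiset.sum_add, h₁, h₂]⟩

noncomputable def sig (hstrong : IsStronglyGraded ℛ) (h : G) :
    Multiset (↥(ℛ h) × ↥(ℛ (-h))) :=
  (exists_one_decomp hstrong h).choose

lemma sig_spec (hstrong : IsStronglyGraded ℛ) (h : G) :
    ((sig hstrong h).map fun p => (p.1 : R) * (p.2 : R)).sum = 1 :=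
  (exists_one_decomp hstrong h).choose_spec

lemma mem_zero_smul (N : GrModK ℛ) {h : G} {v : R} (hv : v ∈ ℛ (-h)) {x : N.carrier}
    (hx : x ∈ N.grading h) : v • x ∈ N.grading 0 := by
  have := N.smul_mem' hv hx; rwa [neg_add_cancel] at this

lemma mem_zero_mul {h : G} {v r : R} (hv : v ∈ ℛ (-h)) (hr : r ∈ ℛ h) : v * r ∈ ℛ 0 := by
  have := GrComp.mul_mem_shift hv hr; rwa [neg_add_cancel] at this

def kToA (c : k) : ↥(ℛ 0) :=
  ⟨algebraMap k R c, by
    rw [Algebra.algebraMap_eq_smul_one]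
    exact (ℛ 0).smul_mem c (SetLike.one_mem_graded ℛ)⟩

@[simp] lemma kToA_coe (c : k) : ((kToA c : ↥(ℛ 0)) : R) = algebraMap k R c := rfl

lemma kR_smul_comm (N : GrModK ℛ) (c : k) (r : R) (x : N.carrier) :
    r • (c • x) = c • (r • x) := by
  rw [← algebraMap_smul R c x, ← algebraMap_smul R c (r • x), ← mul_smul, ← mul_smul,
    Algebra.commutes]

lemma kToA_smul_grading (N : GrModK ℛ) {j : G} (c : k) (y : ↥(N.grading j)) :
    (kToA c : ↥(ℛ 0)) • y = c • y := by
  apply Subtype.ext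
  show (algebraMap k R c) • (y : N.carrier) = ((c • y : ↥(N.grading j)) : N.carrier)
  rw [SetLike.val_smul, algebraMap_smul]

/-- `toZero N v t` is `v • t`, landing in the identity component. -/
def toZero (N : GrModK ℛ) {h : G} (v : ↥(ℛ (-h))) (t : ↥(N.grading h)) : ↥(N.grading 0) :=
  ⟨(v : R) • (t : N.carrier), mem_zero_smul N v.2 t.2⟩

@[simp] lemma toZero_coe (N : GrModK ℛ) {h : G} (v : ↥(ℛ (-h))) (t : ↥(N.grading h)) :
    ((toZero N v t : ↥(N.grading 0)) : N.carrier) = (v : R) • (t : N.carrier) := rfl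

lemma toZero_zero (N : GrModK ℛ) {h : G} (v : ↥(ℛ (-h))) : toZero N v (0 : ↥(N.grading h)) = 0 :=
  Subtype.ext (by rw [toZero_coe, ZeroMemClass.coe_zero, smul_zero]; rfl)

lemma toZero_add (N : GrModK ℛ) {h : G} (v : ↥(ℛ (-h))) (t₁ t₂ : ↥(N.grading h)) :
    toZero N v (t₁ + t₂) = toZero N v t₁ + toZero N v t₂ :=
  Subtype.ext (by rw [toZero_coe, Submodule.coe_add, smul_add, Submodule.coe_add,
    toZero_coe, toZero_coe])

end Basics

section NCTHelpers

variable {A' X Y : Type} [Ring A'] [AddCommGroup X] [AddCommGroup Y]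
  [Module A'ᵐᵒᵖ X] [Module A' Y]

lemma nct_induction_on {p : NCT A' X Y → Prop} (z : NCT A' X Y)
    (zero : p 0) (mk : ∀ x y, p (NCT.mk A' x y)) (add : ∀ a b, p a → p b → p (a + b)) :
    p z := by
  refine QuotientAddGroup.induction_on z fun w => ?_
  induction w using TensorProduct.induction_on with
  | zero => exact zero
  | tmul x y => exact mk x y
  | add a b ha hb => exact add _ _ ha hb

lemma nct_mk_zero_left (y : Y) : NCT.mk A' (0 : X) y = 0 := by
  show QuotientAddGroup.mk _ = _
  rw [TensorProduct.zero_tmul]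
  rfl

lemma nct_mk_zero_right (x : X) : NCT.mk A' x (0 : Y) = 0 := by
  show QuotientAddGroup.mk _ = _
  rw [TensorProduct.tmul_zero]
  rfl

lemma nct_mk_sum_left {ι : Type} (σ : Multiset ι) (q : ι → X) (y : Y) :
    (σ.map fun i => NCT.mk A' (q i) y).sum = NCT.mk A' ((σ.map q).sum) y := by
  induction σ using Multiset.induction with
  | empty => simp [nct_mk_zero_left]
  | cons a s ih => simp only [Multiset.map_cons, Multiset.sum_cons, ih, NCT.mk_add_left]

end NCTHelpers
section MulMap

variable (M : GrModK ℛ) (g : G)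

/-- The bilinear "multiplication" `ℛ g × M₀ → M`, bundled additively. -/
noncomputable def mulBilAdd : ↥(ℛ g) →+ (↥(M.grading 0) →ₗ[ℤ] M.carrier) where
  toFun r := ((DistribMulAction.toAddMonoidHom M.carrier ((r : R))).comp
      ((M.grading 0).subtype.toAddMonoidHom)).toIntLinearMap
  map_zero' := by
    ext m
    show ((0 : ↥(ℛ g)) : R) • (m : M.carrier) = (0 : ↥(M.grading 0) →ₗ[ℤ] M.carrier) m
    rw [ZeroMemClass.coe_zero, zero_smul, LinearMap.zero_apply]
  map_add' r s := by
    ext m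
    show ((r + s : ↥(ℛ g)) : R) • (m : M.carrier) = _
    rw [Submodule.coe_add, add_smul]
    rfl

noncomputable def mulMapPre : (↥(ℛ g) ⊗[ℤ] ↥(M.grading 0)) →ₗ[ℤ] M.carrier :=
  TensorProduct.lift ((mulBilAdd M g).toIntLinearMap)

lemma mulMapPre_vanish : ∀ x ∈ NCT.rels ↥(ℛ 0) ↥(ℛ g) ↥(M.grading 0),
    mulMapPre M g x = 0 := by
  have hle : NCT.rels ↥(ℛ 0) ↥(ℛ g) ↥(M.grading 0) ≤ (mulMapPre M g).toAddMonoidHom.ker := by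
    refine (AddSubgroup.closure_le _).2 ?_
    rintro z ⟨a, m, n, rfl⟩
    rw [SetLike.mem_coe, AddMonoidHom.mem_ker]
    have h1 : mulMapPre M g ((op a • m) ⊗ₜ[ℤ] n - m ⊗ₜ[ℤ] (a • n))
        = ((m : R) * (a : R)) • (n : M.carrier) - (m : R) • ((a : R) • (n : M.carrier)) := by
      rw [map_sub]; rfl
    rw [LinearMap.toAddMonoidHom_coe, h1, mul_smul, sub_self]
  intro x hx
  exact AddMonoidHom.mem_ker.1 (hle hx)

noncomputable def mulMap : NCT ↥(ℛ 0) ↥(ℛ g) ↥(M.grading 0) →+ M.carrier :=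
  QuotientAddGroup.lift _ (mulMapPre M g).toAddMonoidHom (mulMapPre_vanish M g)

lemma mulMap_mk (r : ↥(ℛ g)) (m : ↥(M.grading 0)) :
    mulMap M g (NCT.mk ↥(ℛ 0) r m) = (r : R) • (m : M.carrier) := rfl

lemma mulMap_mem (z : NCT ↥(ℛ 0) ↥(ℛ g) ↥(M.grading 0)) : mulMap M g z ∈ M.grading g := by
  induction z using nct_induction_on with
  | zero => rw [map_zero]; exact (M.grading g).zero_mem
  | mk r m =>
    rw [mulMap_mk]
    have := M.smul_mem' r.2 m.2; rwa [add_zero] at this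
  | add a b ha hb => rw [map_add]; exact (M.grading g).add_mem ha hb

lemma mulMap_Asmul (a : ↥(ℛ 0)) (z : NCT ↥(ℛ 0) ↥(ℛ g) ↥(M.grading 0)) :
    mulMap M g (a • z) = (a : R) • mulMap M g z := by
  induction z using nct_induction_on with
  | zero => rw [smul_zero, map_zero, smul_zero]
  | mk r m => rw [NCT.smul_mk, mulMap_mk, mulMap_mk, GrComp.coe_smul, mul_smul]
  | add x y hx hy => rw [smul_add, map_add, map_add, hx, hy, smul_add]

lemma mulMap_ksmul (c : k) (z : NCT ↥(ℛ 0) ↥(ℛ g) ↥(M.grading 0)) :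
    mulMap M g (c • z) = c • mulMap M g z := by
  induction z using nct_induction_on with
  | zero => rw [smul_zero, map_zero, smul_zero]
  | mk r m =>
    rw [NCT.smul_mk_right, mulMap_mk, mulMap_mk, SetLike.val_smul, kR_smul_comm]
  | add x y hx hy => rw [smul_add, map_add, map_add, hx, hy, smul_add]

noncomputable def mulMapA : NCT ↥(ℛ 0) ↥(ℛ g) ↥(M.grading 0) →ₗ[↥(ℛ 0)] ↥(M.grading g) where
  toFun z := ⟨mulMap M g z, mulMap_mem M g z⟩
  map_add' a b := Subtype.ext (map_add _ a b)
  map_smul' a z := Subtype.ext (mulMap_Asmul M g a z)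

lemma mulMapA_coe (z : NCT ↥(ℛ 0) ↥(ℛ g) ↥(M.grading 0)) :
    ((mulMapA M g z : ↥(M.grading g)) : M.carrier) = mulMap M g z := rfl

lemma mulMapA_ksmul (c : k) (z : NCT ↥(ℛ 0) ↥(ℛ g) ↥(M.grading 0)) :
    mulMapA M g (c • z) = c • mulMapA M g z :=
  Subtype.ext (by rw [mulMapA_coe, SetLike.val_smul, mulMapA_coe, mulMap_ksmul])

/-- The comultiplication attached to a decomposition of `1`. -/
noncomputable def comulHom (σ : Multiset (↥(ℛ g) × ↥(ℛ (-g)))) :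
    ↥(M.grading g) →+ NCT ↥(ℛ 0) ↥(ℛ g) ↥(M.grading 0) where
  toFun x := (σ.map fun p => NCT.mk ↥(ℛ 0) p.1 (toZero M p.2 x)).sum
  map_zero' := by
    refine Multiset.sum_eq_zero ?_
    intro y hy
    rw [Multiset.mem_map] at hy
    obtain ⟨p, hp, rfl⟩ := hy
    rw [toZero_zero, nct_mk_zero_right]
  map_add' x y := by
    rw [← Multiset.sum_map_add]
    refine congrArg Multiset.sum (Multiset.map_congr rfl fun p hp => ?_)
    rw [toZero_add, NCT.mk_add_right]

lemma comulHom_apply (σ : Multiset (↥(ℛ g) × ↥(ℛ (-g)))) (x : ↥(M.grading g)) :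
    comulHom M g σ x = (σ.map fun p => NCT.mk ↥(ℛ 0) p.1 (toZero M p.2 x)).sum := rfl

lemma mulMapA_comul (σ : Multiset (↥(ℛ g) × ↥(ℛ (-g))))
    (hσ : (σ.map fun p => (p.1 : R) * (p.2 : R)).sum = 1) (x : ↥(M.grading g)) :
    mulMapA M g (comulHom M g σ x) = x := by
  apply Subtype.ext
  rw [mulMapA_coe, comulHom_apply, map_multiset_sum, Multiset.map_map]
  have h1 : ∀ p ∈ σ, (mulMap M g ∘ fun p => NCT.mk ↥(ℛ 0) p.1 (toZero M p.2 x)) p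
      = ((p.1 : R) * (p.2 : R)) • (x : M.carrier) := by
    intro p hp
    show mulMap M g (NCT.mk ↥(ℛ 0) p.1 (toZero M p.2 x)) = _
    rw [mulMap_mk, toZero_coe, ← mul_smul]
  rw [Multiset.map_congr rfl h1, sum_map_smul, hσ, one_smul]

lemma comul_mulMapA (σ : Multiset (↥(ℛ g) × ↥(ℛ (-g))))
    (hσ : (σ.map fun p => (p.1 : R) * (p.2 : R)).sum = 1)
    (z : NCT ↥(ℛ 0) ↥(ℛ g) ↥(M.grading 0)) :
    comulHom M g σ (mulMapA M g z) = z := by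
  induction z using nct_induction_on with
  | zero => rw [map_zero, map_zero]
  | add a b ha hb => rw [map_add, map_add, ha, hb]
  | mk r m =>
    rw [comulHom_apply]
    have h1 : ∀ p ∈ σ, NCT.mk ↥(ℛ 0) p.1 (toZero M p.2 (mulMapA M g (NCT.mk ↥(ℛ 0) r m)))
        = NCT.mk ↥(ℛ 0) (op (⟨(p.2 : R) * (r : R), mem_zero_mul p.2.2 r.2⟩ : ↥(ℛ 0)) • p.1) m := by
      intro p hp
      have h2 : toZero M p.2 (mulMapA M g (NCT.mk ↥(ℛ 0) r m))
          = (⟨(p.2 : R) * (r : R), mem_zero_mul p.2.2 r.2⟩ : ↥(ℛ 0)) • m := by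
        apply Subtype.ext
        rw [toZero_coe, mulMapA_coe, mulMap_mk]
        show (p.2 : R) • ((r : R) • (m : M.carrier)) = ((p.2 : R) * (r : R)) • (m : M.carrier)
        rw [mul_smul]
      rw [h2, ← NCT.mk_balanced]
    rw [Multiset.map_congr rfl h1, nct_mk_sum_left]
    congr 1
    apply Subtype.ext
    rw [coe_msum]
    have h3 : ∀ p : ↥(ℛ g) × ↥(ℛ (-g)), p ∈ σ →
        ((op (⟨(p.2 : R) * (r : R), mem_zero_mul p.2.2 r.2⟩ : ↥(ℛ 0)) • p.1 : ↥(ℛ g)) : R)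
        = ((p.1 : R) * (p.2 : R)) * (r : R) := by
      intro p hp
      rw [GrComp.coe_smul_op]
      show (p.1 : R) * ((p.2 : R) * (r : R)) = _
      rw [mul_assoc]
    rw [Multiset.map_congr rfl h3, Multiset.sum_map_mul_right, hσ, one_mul]

noncomputable def compEquiv (hstrong : IsStronglyGraded ℛ) :
    NCT ↥(ℛ 0) ↥(ℛ g) ↥(M.grading 0) ≃ₗ[↥(ℛ 0)] ↥(M.grading g) :=
  LinearEquiv.ofBijective (mulMapA M g)
    ⟨Function.LeftInverse.injective
        (g := comulHom M g (sig hstrong g))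
        (fun z => comul_mulMapA M g _ (sig_spec hstrong g) z),
      fun x => ⟨comulHom M g (sig hstrong g) x, mulMapA_comul M g _ (sig_spec hstrong g) x⟩⟩

lemma compEquiv_apply (hstrong : IsStronglyGraded ℛ) (z : NCT ↥(ℛ 0) ↥(ℛ g) ↥(M.grading 0)) :
    compEquiv M g hstrong z = mulMapA M g z := rfl

lemma compEquiv_symm_ksmul (hstrong : IsStronglyGraded ℛ) (c : k) (x : ↥(M.grading g)) :
    (compEquiv M g hstrong).symm (c • x) = c • (compEquiv M g hstrong).symm x := by
  apply (compEquiv M g hstrong).injective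
  rw [LinearEquiv.apply_symm_apply, compEquiv_apply, mulMapA_ksmul,
    ← compEquiv_apply M g hstrong, LinearEquiv.apply_symm_apply]

end MulMap
section Restr

variable (T' M : GrModK ℛ) (g : G)

noncomputable def restrMap :
    ↥(gradedHomSusp ℛ T' M g) →ₗ[k] (↥(T'.grading 0) →ₗ[↥(ℛ 0)] ↥(M.grading g)) where
  toFun f :=
    { toFun := fun t => ⟨f.1 ↑t, by have := f.2 0 ↑t t.2; rwa [zero_add] at this⟩
      map_add' := fun a b => Subtype.ext (by
        show f.1 ((a + b : ↥(T'.grading 0)) : T'.carrier) = f.1 ↑a + f.1 ↑b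
        rw [Submodule.coe_add, map_add])
      map_smul' := fun a t => Subtype.ext (by
        show f.1 ((a : R) • (t : T'.carrier)) = (a : R) • f.1 ↑t
        rw [map_smul]) }
  map_add' f₁ f₂ := LinearMap.ext fun t => Subtype.ext rfl
  map_smul' c f := LinearMap.ext fun t => Subtype.ext rfl

lemma restrMap_apply (f : ↥(gradedHomSusp ℛ T' M g)) (t : ↥(T'.grading 0)) :
    ((restrMap T' M g f t : ↥(M.grading g)) : M.carrier) = f.1 ↑t := rfl

lemma restrMap_injective (hstrong : IsStronglyGraded ℛ) :
    Function.Injective (restrMap T' M g) := by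
  have key : ∀ f : ↥(gradedHomSusp ℛ T' M g), restrMap T' M g f = 0 → f = 0 := by
    intro f hf
    apply Subtype.ext
    apply LinearMap.ext
    intro x
    show f.1 x = 0
    have hx : x ∈ ⨆ h, T'.grading h := by
      rw [T'.internal'.submodule_iSup_eq_top]; trivial
    refine Submodule.iSup_induction (motive := fun x => f.1 x = 0) _ hx ?_ (map_zero f.1) ?_
    · intro h x hxh
      obtain ⟨σ, hσ⟩ := exists_one_decomp hstrong h
      have hx1 : x = ((σ.map fun p => (p.1 : R) * (p.2 : R)).sum) • x := by
        rw [hσ, one_smul]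
      rw [hx1, ← sum_map_smul, map_multiset_sum, Multiset.map_map]
      refine Multiset.sum_eq_zero ?_
      intro y hy
      rw [Multiset.mem_map] at hy
      obtain ⟨p, hp, rfl⟩ := hy
      show f.1 (((p.1 : R) * (p.2 : R)) • x) = 0
      have hz : f.1 ((p.2 : R) • x) = 0 := by
        have := congrArg (fun φ => ((φ ⟨(p.2 : R) • x, mem_zero_smul T' p.2.2 hxh⟩ :
          ↥(M.grading g)) : M.carrier)) hf
        simpa [restrMap_apply] using this
      rw [mul_smul, map_smul, hz, smul_zero]
    · intro x y hx hy
      rw [map_add, hx, hy, add_zero]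
  intro f₁ f₂ hf
  have h0 := key (f₁ - f₂) (by rw [map_sub, hf, sub_self])
  rwa [sub_eq_zero] at h0

variable {T' M g}

/-- The degree-`h` piece of the extension of `α` to a graded map of degree `g`. -/
noncomputable def extAux (hstrong : IsStronglyGraded ℛ)
    (α : ↥(T'.grading 0) →ₗ[↥(ℛ 0)] ↥(M.grading g)) (h : G) : ↥(T'.grading h) →+ M.carrier where
  toFun t := ((sig hstrong h).map fun p =>
      (p.1 : R) • ((α (toZero T' p.2 t) : ↥(M.grading g)) : M.carrier)).sum
  map_zero' := by
    refine Multiset.sum_eq_zero ?_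
    intro y hy
    rw [Multiset.mem_map] at hy
    obtain ⟨p, hp, rfl⟩ := hy
    rw [toZero_zero, map_zero, ZeroMemClass.coe_zero, smul_zero]
  map_add' t₁ t₂ := by
    rw [← Multiset.sum_map_add]
    refine congrArg Multiset.sum (Multiset.map_congr rfl fun p hp => ?_)
    rw [toZero_add, map_add, Submodule.coe_add, smul_add]

lemma extAux_apply (hstrong : IsStronglyGraded ℛ)
    (α : ↥(T'.grading 0) →ₗ[↥(ℛ 0)] ↥(M.grading g)) (h : G) (t : ↥(T'.grading h)) :
    extAux hstrong α h t = ((sig hstrong h).map fun p =>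
      (p.1 : R) • ((α (toZero T' p.2 t) : ↥(M.grading g)) : M.carrier)).sum := rfl

lemma extAux_smul (hstrong : IsStronglyGraded ℛ)
    (α : ↥(T'.grading 0) →ₗ[↥(ℛ 0)] ↥(M.grading g)) {m h : G} (r : R) (hr : r ∈ ℛ m)
    (t : ↥(T'.grading h)) :
    extAux hstrong α (m + h) ⟨r • ↑t, T'.smul_mem' hr t.2⟩ = r • extAux hstrong α h t := by
  set σ₁ := sig hstrong (m + h) with hσ₁def
  set σ₂ := sig hstrong h with hσ₂def
  have hσ₁ := sig_spec hstrong (m + h)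
  have hσ₂ := sig_spec hstrong h
  -- the scalar in `ℛ 0` indexed by `p, q`
  let aA : (↥(ℛ (m+h)) × ↥(ℛ (-(m+h)))) → (↥(ℛ h) × ↥(ℛ (-h))) → ↥(ℛ 0) := fun p q =>
    ⟨(p.2 : R) * ((r : R) * (q.1 : R)),
      mem_zero_mul p.2.2 (GrComp.mul_mem_shift hr q.1.2)⟩
  -- Step A: decompose the argument of α
  have hA : ∀ p : ↥(ℛ (m+h)) × ↥(ℛ (-(m+h))),
      toZero T' p.2 (⟨r • ↑t, T'.smul_mem' hr t.2⟩ : ↥(T'.grading (m+h)))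
        = (σ₂.map fun q => aA p q • toZero T' q.2 t).sum := by
    intro p
    apply Subtype.ext
    rw [coe_msum]
    have h1 : ∀ q : ↥(ℛ h) × ↥(ℛ (-h)), q ∈ σ₂ →
        ((aA p q • toZero T' q.2 t : ↥(T'.grading 0)) : T'.carrier)
          = (p.2 : R) • ((r : R) • (((q.1 : R) * (q.2 : R)) • (t : T'.carrier))) := by
      intro q hq
      show ((p.2 : R) * ((r : R) * (q.1 : R))) • ((q.2 : R) • (t : T'.carrier)) = _
      simp only [mul_smul]
    rw [Multiset.map_congr rfl h1]
    show (p.2 : R) • ((r : R) • (t : T'.carrier)) = _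
    have ht : (t : T'.carrier) = ((σ₂.map fun q => (q.1 : R) * (q.2 : R)).sum) • (t : T'.carrier) := by
      rw [hσ₂, one_smul]
    calc (p.2 : R) • ((r : R) • (t : T'.carrier))
        = (p.2 : R) • ((r : R) • (((σ₂.map fun q => (q.1 : R) * (q.2 : R)).sum) • (t : T'.carrier))) := by
          rw [← ht]
      _ = (σ₂.map fun q => (p.2 : R) • ((r : R) • (((q.1 : R) * (q.2 : R)) • (t : T'.carrier)))).sum := by
          rw [← sum_map_smul, Multiset.smul_sum, Multiset.smul_sum, Multiset.map_map, Multiset.map_map]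
          rfl
  -- Step B/C: compute the whole sum
  rw [extAux_apply, extAux_apply]
  have hB : ∀ p : ↥(ℛ (m+h)) × ↥(ℛ (-(m+h))), p ∈ σ₁ →
      (p.1 : R) • ((α (toZero T' p.2 (⟨r • ↑t, T'.smul_mem' hr t.2⟩ : ↥(T'.grading (m+h)))) :
          ↥(M.grading g)) : M.carrier)
        = (σ₂.map fun q => (((p.1 : R) * (p.2 : R)) * ((r : R) * (q.1 : R))) •
            ((α (toZero T' q.2 t) : ↥(M.grading g)) : M.carrier)).sum := by
    intro p hp
    rw [hA p, map_multiset_sum, Multiset.map_map, coe_msum, Multiset.smul_sum,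
      Multiset.map_map]
    refine congrArg Multiset.sum (Multiset.map_congr rfl fun q hq => ?_)
    show (p.1 : R) • ((α (aA p q • toZero T' q.2 t) : ↥(M.grading g)) : M.carrier) = _
    rw [map_smul]
    show (p.1 : R) • (((p.2 : R) * ((r : R) * (q.1 : R))) •
      ((α (toZero T' q.2 t) : ↥(M.grading g)) : M.carrier)) = _
    simp only [mul_smul]
  rw [Multiset.map_congr rfl hB, multiset_sum_comm]
  rw [Multiset.smul_sum, Multiset.map_map]
  refine congrArg Multiset.sum (Multiset.map_congr rfl fun q hq => ?_)
  rw [sum_map_smul]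
  have h2 : (σ₁.map fun p => ((p.1 : R) * (p.2 : R)) * ((r : R) * (q.1 : R))).sum
      = (r : R) * (q.1 : R) := by
    rw [Multiset.sum_map_mul_right, hσ₁, one_mul]
  rw [h2]
  show ((r : R) * (q.1 : R)) • _ = (r : R) • ((q.1 : R) • _)
  rw [mul_smul]

/-- The extension of `α` to a graded map. -/
noncomputable def extFun (hstrong : IsStronglyGraded ℛ)
    (α : ↥(T'.grading 0) →ₗ[↥(ℛ 0)] ↥(M.grading g)) : T'.carrier →+ M.carrier :=
  letI := T'.internal'.chooseDecomposition
  (DirectSum.toAddMonoid fun h => extAux hstrong α h).comp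
    (DirectSum.decomposeAddEquiv T'.grading).toAddMonoidHom

lemma extFun_of_mem (hstrong : IsStronglyGraded ℛ)
    (α : ↥(T'.grading 0) →ₗ[↥(ℛ 0)] ↥(M.grading g)) {h : G} {x : T'.carrier}
    (hx : x ∈ T'.grading h) :
    extFun hstrong α x = extAux hstrong α h ⟨x, hx⟩ := by
  letI := T'.internal'.chooseDecomposition
  show DirectSum.toAddMonoid (fun h => extAux hstrong α h)
    (DirectSum.decomposeAddEquiv T'.grading x) = _
  rw [DirectSum.decomposeAddEquiv_apply, DirectSum.decompose_of_mem _ hx,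
    DirectSum.toAddMonoid_of]

lemma extFun_rsmul [DirectSum.Decomposition ℛ] (hstrong : IsStronglyGraded ℛ)
    (α : ↥(T'.grading 0) →ₗ[↥(ℛ 0)] ↥(M.grading g)) (r : R) (x : T'.carrier) :
    extFun hstrong α (r • x) = r • extFun hstrong α x := by
  revert x
  refine DirectSum.Decomposition.inductionOn ℛ
    (motive := fun r => ∀ x, extFun hstrong α (r • x) = r • extFun hstrong α x) ?_ ?_ ?_ r
  · intro x; rw [zero_smul, map_zero, zero_smul]
  · rintro m r'
    intro x
    have hx : x ∈ ⨆ h, T'.grading h := by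
      rw [T'.internal'.submodule_iSup_eq_top]; trivial
    refine Submodule.iSup_induction
      (motive := fun x => extFun hstrong α ((r' : R) • x) = (r' : R) • extFun hstrong α x) _ hx ?_ ?_ ?_
    · intro h x hxh
      rw [extFun_of_mem hstrong α (T'.smul_mem' r'.2 hxh), extFun_of_mem hstrong α hxh]
      exact extAux_smul hstrong α (r' : R) r'.2 ⟨x, hxh⟩
    · show extFun hstrong α ((r' : R) • (0 : T'.carrier)) = (r' : R) • extFun hstrong α 0
      rw [smul_zero, map_zero, smul_zero]
    · intro x y hx hy
      rw [smul_add, map_add, hx, hy, map_add, smul_add]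
  · intro r₁ r₂ h₁ h₂ x
    rw [add_smul, map_add, h₁ x, h₂ x, add_smul]

lemma extFun_graded (hstrong : IsStronglyGraded ℛ)
    (α : ↥(T'.grading 0) →ₗ[↥(ℛ 0)] ↥(M.grading g)) {h : G} {x : T'.carrier}
    (hx : x ∈ T'.grading h) : extFun hstrong α x ∈ M.grading (h + g) := by
  rw [extFun_of_mem hstrong α hx, extAux_apply]
  refine msum_mem _ _ ?_
  intro p hp
  exact M.smul_mem' p.1.2 (α (toZero T' p.2 ⟨x, hx⟩)).2

lemma extFun_restr (hstrong : IsStronglyGraded ℛ)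
    (α : ↥(T'.grading 0) →ₗ[↥(ℛ 0)] ↥(M.grading g)) (t : ↥(T'.grading 0)) :
    extFun hstrong α ↑t = ((α t : ↥(M.grading g)) : M.carrier) := by
  rw [extFun_of_mem hstrong α t.2, extAux_apply]
  have h1 : ∀ p : ↥(ℛ 0) × ↥(ℛ (-0)), p ∈ sig hstrong 0 →
      (p.1 : R) • ((α (toZero T' p.2 ⟨↑t, t.2⟩) : ↥(M.grading g)) : M.carrier)
        = ((α (p.1 • toZero T' p.2 ⟨↑t, t.2⟩) : ↥(M.grading g)) : M.carrier) := by
    intro p hp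
    rw [map_smul]
    rfl
  rw [Multiset.map_congr rfl h1, ← coe_msum]
  refine Eq.trans (congrArg _ ?_) rfl
  have h2 : ((sig hstrong 0).map fun p => p.1 • toZero T' p.2 (⟨↑t, t.2⟩ : ↥(T'.grading 0))).sum
      = t := by
    apply Subtype.ext
    rw [coe_msum]
    have h3 : ∀ p : ↥(ℛ 0) × ↥(ℛ (-0)), p ∈ sig hstrong 0 →
        ((p.1 • toZero T' p.2 (⟨↑t, t.2⟩ : ↥(T'.grading 0)) : ↥(T'.grading 0)) : T'.carrier)
          = ((p.1 : R) * (p.2 : R)) • (t : T'.carrier) := by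
      intro p hp
      show (p.1 : R) • ((p.2 : R) • (t : T'.carrier)) = _
      rw [mul_smul]
    rw [Multiset.map_congr rfl h3, sum_map_smul, sig_spec, one_smul]
  rw [show (fun p : ↥(ℛ 0) × ↥(ℛ (-0)) =>
        α (p.1 • toZero T' p.2 (⟨↑t, t.2⟩ : ↥(T'.grading 0))))
      = (⇑α ∘ fun p : ↥(ℛ 0) × ↥(ℛ (-0)) =>
        p.1 • toZero T' p.2 (⟨↑t, t.2⟩ : ↥(T'.grading 0))) from rfl,
    ← Multiset.map_map, ← map_multiset_sum, h2]

variable (T' M g)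

lemma restrMap_surjective [DirectSum.Decomposition ℛ] (hstrong : IsStronglyGraded ℛ) :
    Function.Surjective (restrMap T' M g) := by
  intro α
  refine ⟨⟨{ toFun := extFun hstrong α
             map_add' := map_add _
             map_smul' := fun r x => extFun_rsmul hstrong α r x },
    fun h x hx => extFun_graded hstrong α hx⟩, ?_⟩
  apply LinearMap.ext
  intro t
  apply Subtype.ext
  rw [restrMap_apply]
  exact extFun_restr hstrong α t

/-- Part 1 of the statement, first leg. -/
noncomputable def E1 [DirectSum.Decomposition ℛ] (hstrong : IsStronglyGraded ℛ) :
    ↥(gradedHomSusp ℛ T' M g) ≃ₗ[k] (↥(T'.grading 0) →ₗ[↥(ℛ 0)] ↥(M.grading g)) :=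
  LinearEquiv.ofBijective (restrMap T' M g)
    ⟨restrMap_injective T' M g hstrong, restrMap_surjective T' M g hstrong⟩

/-- Part 1, second leg: postcomposition with the component equivalence. -/
noncomputable def homCongr (hstrong : IsStronglyGraded ℛ) :
    (↥(T'.grading 0) →ₗ[↥(ℛ 0)] ↥(M.grading g)) ≃ₗ[k]
      (↥(T'.grading 0) →ₗ[↥(ℛ 0)] NCT ↥(ℛ 0) ↥(ℛ g) ↥(M.grading 0)) where
  toFun φ := ((compEquiv M g hstrong).symm.toLinearMap).comp φ
  invFun ψ := ((compEquiv M g hstrong).toLinearMap).comp ψ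
  map_add' φ ψ := LinearMap.ext fun t => by
    simp only [LinearMap.comp_apply, LinearEquiv.coe_coe, LinearMap.add_apply, map_add]
  map_smul' c φ := LinearMap.ext fun t => by
    simp only [LinearMap.comp_apply, LinearEquiv.coe_coe, LinearMap.smul_apply,
      RingHom.id_apply]
    rw [compEquiv_symm_ksmul]
  left_inv φ := LinearMap.ext fun t => by
    simp only [LinearMap.comp_apply, LinearEquiv.coe_coe, LinearEquiv.apply_symm_apply]
  right_inv ψ := LinearMap.ext fun t => by
    simp only [LinearMap.comp_apply, LinearEquiv.coe_coe, LinearEquiv.symm_apply_apply]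

/-- The isomorphism of part 1. -/
noncomputable def part1 [DirectSum.Decomposition ℛ] (hstrong : IsStronglyGraded ℛ) :
    ↥(gradedHomSusp ℛ T' M g) ≃ₗ[k]
      (↥(T'.grading 0) →ₗ[↥(ℛ 0)] NCT ↥(ℛ 0) ↥(ℛ g) ↥(M.grading 0)) :=
  (E1 T' M g hstrong).trans (homCongr T' M g hstrong)

end Restr
section Part2

variable (T' M : GrModK ℛ)

/-- Projection onto the degree-`j` component of a graded module. -/
noncomputable def proj (N : GrModK ℛ) (j : G) (y : N.carrier) : N.carrier :=
  letI := N.internal'.chooseDecomposition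
  ↑(DirectSum.decompose N.grading y j)

lemma proj_zero (N : GrModK ℛ) (j : G) : proj N j 0 = 0 := by
  letI := N.internal'.chooseDecomposition
  show ((DirectSum.decompose N.grading (0 : N.carrier) j : ↥(N.grading j)) : N.carrier) = 0
  rw [DirectSum.decompose_zero, DirectSum.zero_apply, ZeroMemClass.coe_zero]

lemma proj_add (N : GrModK ℛ) (j : G) (y z : N.carrier) :
    proj N j (y + z) = proj N j y + proj N j z := by
  letI := N.internal'.chooseDecomposition
  show ((DirectSum.decompose N.grading (y + z) j : ↥(N.grading j)) : N.carrier) = _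
  rw [DirectSum.decompose_add, DirectSum.add_apply, Submodule.coe_add]
  rfl

lemma proj_mem (N : GrModK ℛ) (j : G) (y : N.carrier) : proj N j y ∈ N.grading j := by
  letI := N.internal'.chooseDecomposition
  exact (DirectSum.decompose N.grading y j).2

lemma proj_of_mem_same (N : GrModK ℛ) {j : G} {y : N.carrier} (hy : y ∈ N.grading j) :
    proj N j y = y := by
  letI := N.internal'.chooseDecomposition
  exact DirectSum.decompose_of_mem_same N.grading hy

lemma proj_of_mem_ne (N : GrModK ℛ) {i j : G} {y : N.carrier} (hy : y ∈ N.grading i)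
    (hij : i ≠ j) : proj N j y = 0 := by
  letI := N.internal'.chooseDecomposition
  exact DirectSum.decompose_of_mem_ne N.grading hy hij

lemma proj_smul_homog (N : GrModK ℛ) {m : G} {r : R} (hr : r ∈ ℛ m) (j : G) (y : N.carrier) :
    proj N (m + j) (r • y) = r • proj N j y := by
  have hy : y ∈ ⨆ i, N.grading i := by
    rw [N.internal'.submodule_iSup_eq_top]; trivial
  refine Submodule.iSup_induction
    (motive := fun y => proj N (m + j) (r • y) = r • proj N j y) _ hy ?_ ?_ ?_
  · intro i y hyi
    by_cases hji : j = i
    · subst hji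
      rw [proj_of_mem_same N (N.smul_mem' hr hyi), proj_of_mem_same N hyi]
    · rw [proj_of_mem_ne N (N.smul_mem' hr hyi) (fun hh => hji (add_left_cancel hh).symm),
        proj_of_mem_ne N hyi (fun hh => hji hh.symm), smul_zero]
  · show proj N (m + j) (r • (0 : N.carrier)) = r • proj N j 0
    rw [smul_zero, proj_zero, proj_zero, smul_zero]
  · intro y z hy hz
    rw [smul_add, proj_add, hy, hz, proj_add, smul_add]

/-- Sum-of-inclusions map from the direct sum of graded Hom spaces. -/
noncomputable def Smap : (⨁ g' : G, ↥(gradedHomSusp ℛ T' M g')) →ₗ[k]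
    (T'.carrier →ₗ[R] M.carrier) :=
  DirectSum.toModule k G _ (fun g' => (gradedHomSusp ℛ T' M g').subtype)

lemma Smap_lof (g' : G) (f : ↥(gradedHomSusp ℛ T' M g')) :
    Smap T' M (DirectSum.lof k G _ g' f) = ↑f := by
  exact DirectSum.toModule_lof (R := k) (N := T'.carrier →ₗ[R] M.carrier)
    (φ := fun g' => (gradedHomSusp ℛ T' M g').subtype) g' f

lemma proj_Smap (Φ : ⨁ g' : G, ↥(gradedHomSusp ℛ T' M g')) (g₀ h : G) (x : T'.carrier)
    (hx : x ∈ T'.grading h) :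
    proj M (h + g₀) (Smap T' M Φ x)
      = ((Φ g₀ : ↥(gradedHomSusp ℛ T' M g₀)) : T'.carrier →ₗ[R] M.carrier) x := by
  induction Φ using DirectSum.induction_on with
  | zero =>
    rw [map_zero, LinearMap.zero_apply, proj_zero, DirectSum.zero_apply,
      ZeroMemClass.coe_zero, LinearMap.zero_apply]
  | of g' f =>
    have hS : Smap T' M (DirectSum.of _ g' f) = (f : T'.carrier →ₗ[R] M.carrier) := by
      rw [← DirectSum.lof_eq_of k]; exact Smap_lof T' M g' f
    rw [hS]
    by_cases hg : g' = g₀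
    · subst hg
      rw [proj_of_mem_same M (f.2 h x hx), DirectSum.of_eq_same]
    · rw [proj_of_mem_ne M (f.2 h x hx) (fun hh => hg (add_left_cancel hh)),
        DirectSum.of_eq_of_ne _ _ _ (Ne.symm hg), ZeroMemClass.coe_zero, LinearMap.zero_apply]
  | add a b ha hb =>
    rw [map_add, LinearMap.add_apply, proj_add, ha, hb, DirectSum.add_apply,
      Submodule.coe_add, LinearMap.add_apply]

lemma Smap_injective : Function.Injective (Smap T' M) := by
  have key : ∀ Φ, Smap T' M Φ = 0 → Φ = 0 := by
    intro Φ hΦ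
    refine DFinsupp.ext fun g₀ => ?_
    apply Subtype.ext
    apply LinearMap.ext
    intro x
    show ((Φ g₀ : ↥(gradedHomSusp ℛ T' M g₀)) : T'.carrier →ₗ[R] M.carrier) x = _
    have hx : x ∈ ⨆ h, T'.grading h := by
      rw [T'.internal'.submodule_iSup_eq_top]; trivial
    refine Submodule.iSup_induction
      (motive := fun x => ((Φ g₀ : ↥(gradedHomSusp ℛ T' M g₀)) : T'.carrier →ₗ[R] M.carrier) x
        = ((0 : ↥(gradedHomSusp ℛ T' M g₀)) : T'.carrier →ₗ[R] M.carrier) x) _ hx ?_ ?_ ?_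
    · intro h x hxh
      rw [← proj_Smap T' M Φ g₀ h x hxh, hΦ]
      rw [LinearMap.zero_apply, proj_zero]
      rfl
    · show ((Φ g₀ : ↥(gradedHomSusp ℛ T' M g₀)) : T'.carrier →ₗ[R] M.carrier) 0
        = ((0 : ↥(gradedHomSusp ℛ T' M g₀)) : T'.carrier →ₗ[R] M.carrier) 0
      rw [map_zero, map_zero]
    · intro x y hx hy
      show ((Φ g₀ : ↥(gradedHomSusp ℛ T' M g₀)) : T'.carrier →ₗ[R] M.carrier) (x + y) = _
      rw [map_add, map_add, hx, hy]
  intro Φ Ψ h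
  have h0 := key (Φ - Ψ) (by rw [map_sub, h, sub_self])
  rwa [sub_eq_zero] at h0

variable {T' M}

/-- Degree-`h` piece of the `g'`-component of an `R`-linear map. -/
noncomputable def compAux (f : T'.carrier →ₗ[R] M.carrier) (g' h : G) :
    ↥(T'.grading h) →+ M.carrier where
  toFun t := proj M (h + g') (f ↑t)
  map_zero' := by
    show proj M (h + g') (f ↑(0 : ↥(T'.grading h))) = 0
    rw [ZeroMemClass.coe_zero, map_zero, proj_zero]
  map_add' a b := by
    show proj M (h + g') (f ↑(a + b)) = proj M (h + g') (f ↑a) + proj M (h + g') (f ↑b)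
    rw [Submodule.coe_add, map_add, proj_add]

/-- The `g'`-graded component of an `R`-linear map. -/
noncomputable def compFun (f : T'.carrier →ₗ[R] M.carrier) (g' : G) :
    T'.carrier →+ M.carrier :=
  letI := T'.internal'.chooseDecomposition
  (DirectSum.toAddMonoid fun h => compAux f g' h).comp
    (DirectSum.decomposeAddEquiv T'.grading).toAddMonoidHom

lemma compFun_of_mem (f : T'.carrier →ₗ[R] M.carrier) (g' : G) {h : G} {x : T'.carrier}
    (hx : x ∈ T'.grading h) : compFun f g' x = proj M (h + g') (f x) := by
  letI := T'.internal'.chooseDecomposition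
  show DirectSum.toAddMonoid (fun h => compAux f g' h)
    (DirectSum.decomposeAddEquiv T'.grading x) = _
  rw [DirectSum.decomposeAddEquiv_apply, DirectSum.decompose_of_mem _ hx,
    DirectSum.toAddMonoid_of]
  rfl

lemma compFun_rsmul [DirectSum.Decomposition ℛ] (f : T'.carrier →ₗ[R] M.carrier) (g' : G)
    (r : R) (x : T'.carrier) : compFun f g' (r • x) = r • compFun f g' x := by
  revert x
  refine DirectSum.Decomposition.inductionOn ℛ
    (motive := fun r => ∀ x, compFun f g' (r • x) = r • compFun f g' x) ?_ ?_ ?_ r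
  · intro x; rw [zero_smul, map_zero, zero_smul]
  · rintro m r'
    intro x
    have hx : x ∈ ⨆ h, T'.grading h := by
      rw [T'.internal'.submodule_iSup_eq_top]; trivial
    refine Submodule.iSup_induction
      (motive := fun x => compFun f g' ((r' : R) • x) = (r' : R) • compFun f g' x) _ hx ?_ ?_ ?_
    · intro h x hxh
      rw [compFun_of_mem f g' (T'.smul_mem' r'.2 hxh), compFun_of_mem f g' hxh, map_smul,
        add_assoc, proj_smul_homog M r'.2]
    · show compFun f g' ((r' : R) • (0 : T'.carrier)) = (r' : R) • compFun f g' 0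
      rw [smul_zero, map_zero, smul_zero]
    · intro x y hx hy
      rw [smul_add, map_add, hx, hy, map_add, smul_add]
  · intro r₁ r₂ h₁ h₂ x
    rw [add_smul, map_add, h₁ x, h₂ x, add_smul]

lemma compFun_graded (f : T'.carrier →ₗ[R] M.carrier) (g' : G) {h : G} {x : T'.carrier}
    (hx : x ∈ T'.grading h) : compFun f g' x ∈ M.grading (h + g') := by
  rw [compFun_of_mem f g' hx]
  exact proj_mem M (h + g') (f x)

/-- The `g'`-component as an element of the graded Hom space. -/
noncomputable def compL [DirectSum.Decomposition ℛ] (f : T'.carrier →ₗ[R] M.carrier)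
    (g' : G) : ↥(gradedHomSusp ℛ T' M g') :=
  ⟨{ toFun := compFun f g'
     map_add' := map_add _
     map_smul' := fun r x => compFun_rsmul f g' r x },
    fun h x hx => compFun_graded f g' hx⟩

open Classical in
/-- A finite set of degrees outside which the components of `f` vanish at `y`. -/
noncomputable def suppFin (f : T'.carrier →ₗ[R] M.carrier) (y : T'.carrier) : Finset G :=
  letI := T'.internal'.chooseDecomposition
  letI := M.internal'.chooseDecomposition
  (DirectSum.decompose T'.grading y).support.biUnion fun h =>
    (DirectSum.decompose M.grading
      (f ↑(DirectSum.decompose T'.grading y h))).support.image fun j => -h + j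

open Classical in
lemma compFun_eq_zero_of_not_mem (f : T'.carrier →ₗ[R] M.carrier) (y : T'.carrier) {g' : G}
    (hg : g' ∉ suppFin f y) : compFun f g' y = 0 := by
  letI := T'.internal'.chooseDecomposition
  letI := M.internal'.chooseDecomposition
  have h0 : compFun f g' y
      = DirectSum.toAddMonoid (fun h => compAux f g' h) (DirectSum.decompose T'.grading y) := by
    show DirectSum.toAddMonoid (fun h => compAux f g' h)
      (DirectSum.decomposeAddEquiv T'.grading y) = _
    rw [DirectSum.decomposeAddEquiv_apply]
  rw [h0, ← DirectSum.sum_support_of (DirectSum.decompose T'.grading y), map_sum]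
  refine Finset.sum_eq_zero ?_
  intro h hh
  rw [DirectSum.toAddMonoid_of]
  show proj M (h + g') (f ↑(DirectSum.decompose T'.grading y h)) = 0
  have hnot : h + g' ∉ (DirectSum.decompose M.grading
      (f ↑(DirectSum.decompose T'.grading y h))).support := by
    intro hmem
    exact hg (Finset.mem_biUnion.2 ⟨h, hh, Finset.mem_image.2 ⟨h + g', hmem, by
      rw [neg_add_cancel_left]⟩⟩)
  show ((DirectSum.decompose M.grading
      (f ↑(DirectSum.decompose T'.grading y h)) (h + g') : ↥(M.grading (h + g'))) : M.carrier) = 0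
  rw [DFinsupp.notMem_support_iff.1 hnot, ZeroMemClass.coe_zero]

end Part2
section Final

variable (T' M : GrModK ℛ)

open Classical in
lemma compL_eq_zero [DirectSum.Decomposition ℛ] (f : T'.carrier →ₗ[R] M.carrier)
    (Sg : Finset T'.carrier) (hspan : Submodule.span R (↑Sg : Set T'.carrier) = ⊤)
    {g' : G} (hg : g' ∉ Sg.biUnion (suppFin f)) : compL f g' = (0 : ↥(gradedHomSusp ℛ T' M g')) := by
  apply Subtype.ext
  apply LinearMap.ext
  intro x
  show compFun f g' x = ((0 : ↥(gradedHomSusp ℛ T' M g')) : T'.carrier →ₗ[R] M.carrier) x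
  rw [ZeroMemClass.coe_zero, LinearMap.zero_apply]
  have hx : x ∈ Submodule.span R (↑Sg : Set T'.carrier) := by rw [hspan]; trivial
  refine Submodule.span_induction ?_ ?_ ?_ ?_ hx
  · intro y hy
    refine compFun_eq_zero_of_not_mem f y ?_
    intro hmem
    exact hg (Finset.mem_biUnion.2 ⟨y, hy, hmem⟩)
  · exact map_zero _
  · intro y z _ _ hy hz
    rw [map_add, hy, hz, add_zero]
  · intro r y _ hy
    rw [compFun_rsmul, hy, smul_zero]

open Classical in
lemma Smap_sum_comp [DirectSum.Decomposition ℛ] (f : T'.carrier →ₗ[R] M.carrier)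
    (Sg : Finset T'.carrier) (hspan : Submodule.span R (↑Sg : Set T'.carrier) = ⊤) :
    Smap T' M (∑ g' ∈ Sg.biUnion (suppFin f),
      DirectSum.lof k G (fun g' => ↥(gradedHomSusp ℛ T' M g')) g' (compL f g')) = f := by
  classical
  letI := M.internal'.chooseDecomposition
  set s : Finset G := Sg.biUnion (suppFin f) with hs
  rw [map_sum]
  have hbody : ∀ g' ∈ s, Smap T' M (DirectSum.lof k G
      (fun g' => ↥(gradedHomSusp ℛ T' M g')) g' (compL f g'))
      = ((compL f g' : ↥(gradedHomSusp ℛ T' M g')) : T'.carrier →ₗ[R] M.carrier) :=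
    fun g' _ => Smap_lof T' M g' (compL f g')
  rw [Finset.sum_congr rfl hbody]
  apply LinearMap.ext
  intro x
  have hx : x ∈ ⨆ h, T'.grading h := by
    rw [T'.internal'.submodule_iSup_eq_top]; trivial
  refine Submodule.iSup_induction
    (motive := fun x => (∑ g' ∈ s,
      ((compL f g' : ↥(gradedHomSusp ℛ T' M g')) : T'.carrier →ₗ[R] M.carrier)) x = f x)
    _ hx ?_ ?_ ?_
  · intro h x hxh
    rw [LinearMap.sum_apply]
    have hterm : ∀ g' ∈ s, ((compL f g' : ↥(gradedHomSusp ℛ T' M g')) :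
        T'.carrier →ₗ[R] M.carrier) x = proj M (h + g') (f x) :=
      fun g' _ => compFun_of_mem f g' hxh
    rw [Finset.sum_congr rfl hterm]
    have hkey : ∀ j : G, -h + j ∉ s → proj M j (f x) = 0 := by
      intro j hj
      have h0 := compL_eq_zero T' M f Sg hspan hj
      have h1 : compFun f (-h + j) x = 0 := by
        have := congrArg (fun (φ : ↥(gradedHomSusp ℛ T' M (-h + j))) =>
          ((φ : T'.carrier →ₗ[R] M.carrier) x)) h0
        exact this
      rw [compFun_of_mem f (-h + j) hxh, add_neg_cancel_left] at h1
      exact h1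
    rw [← Finset.sum_image (g := fun g' => h + g') (f := fun j => proj M j (f x))
      (fun a _ b _ hab => add_left_cancel hab)]
    have hsub : (DirectSum.decompose M.grading (f x)).support ⊆ s.image (fun g' => h + g') := by
      intro j hjsupp
      by_contra hnot
      have hj : -h + j ∉ s := by
        intro hmem
        exact hnot (Finset.mem_image.2 ⟨-h + j, hmem, add_neg_cancel_left h j⟩)
      have := hkey j hj
      rw [DFinsupp.mem_support_iff] at hjsupp
      apply hjsupp
      apply Subtype.ext
      exact this
    have hvan : ∀ j ∈ s.image (fun g' => h + g'),
        j ∉ (DirectSum.decompose M.grading (f x)).support → proj M j (f x) = 0 := by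
      intro j _ hj
      show ((DirectSum.decompose M.grading (f x) j : ↥(M.grading j)) : M.carrier) = 0
      rw [DFinsupp.notMem_support_iff.1 hj, ZeroMemClass.coe_zero]
    rw [← Finset.sum_subset hsub hvan]
    exact DirectSum.sum_support_decompose M.grading (f x)
  · show (∑ g' ∈ s,
        ((compL f g' : ↥(gradedHomSusp ℛ T' M g')) : T'.carrier →ₗ[R] M.carrier)) 0 = f 0
    rw [map_zero, map_zero]
  · intro x y hx hy
    show (∑ g' ∈ s,
        ((compL f g' : ↥(gradedHomSusp ℛ T' M g')) : T'.carrier →ₗ[R] M.carrier)) (x + y) = _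
    rw [map_add, map_add, hx, hy]

lemma Smap_surjective [DirectSum.Decomposition ℛ] (hfin : Module.Finite R T'.carrier) :
    Function.Surjective (Smap T' M) := by
  intro f
  obtain ⟨Sg, hspan⟩ := hfin.fg_top
  exact ⟨_, Smap_sum_comp T' M f Sg hspan⟩

/-- The isomorphism of part 2. -/
noncomputable def part2 [DirectSum.Decomposition ℛ] (hstrong : IsStronglyGraded ℛ)
    (hfin : Module.Finite R T'.carrier) :
    (T'.carrier →ₗ[R] M.carrier) ≃ₗ[k]
      ⨁ g' : G, (↥(T'.grading 0) →ₗ[↥(ℛ 0)] NCT ↥(ℛ 0) ↥(ℛ g') ↥(M.grading 0)) :=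
  ((LinearEquiv.ofBijective (Smap T' M)
      ⟨Smap_injective T' M, Smap_surjective T' M hfin⟩).symm).trans
    (DFinsupp.mapRange.linearEquiv fun g' => part1 T' M g' hstrong)

end Final
end Stmt14Aux

theorem graded_hom_iso_hom_conjugate
    [DirectSum.Decomposition ℛ] (hstrong : IsStronglyGraded ℛ)
    (T' M : GrModK ℛ) (g : G) :
    Nonempty (↥(gradedHomSusp ℛ T' M g) ≃ₗ[k]
      (↥(T'.grading 0) →ₗ[↥(ℛ 0)] NCT ↥(ℛ 0) ↥(ℛ g) ↥(M.grading 0))) ∧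
    (Module.Finite R T'.carrier →
      Nonempty ((T'.carrier →ₗ[R] M.carrier) ≃ₗ[k]
        ⨁ g' : G, (↥(T'.grading 0) →ₗ[↥(ℛ 0)] NCT ↥(ℛ 0) ↥(ℛ g') ↥(M.grading 0)))) := by
  constructor
  · exact ⟨Stmt14Aux.part1 T' M g hstrong⟩
  · intro hfin
    exact ⟨Stmt14Aux.part2 T' M hstrong hfin⟩

end Statement14
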